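/- Define Q^u_d(y) = Σ_{k=0}^{d} C(d,k) · ∏_{i=0}^{k-1}(i+1-r)(i+r) · ∏_{i=k+1}^{d}(y+d+r-i)(y+u+r+i) and φ_d(y) = ∏_{i=1}^{d}(y+i)(y+i-1+2r). Then Q^0_d(y) = φ_d(y) for all natural numbers d, as polynomials in y and r. -/

import Mathlib

open Finset

/-- The two-variable polynomial ring `ℚ[y, r]`: variable `0` is `y` and variable `1` is `r`. -/
noncomputable abbrev R2 : Type := MvPolynomial (Fin 2) ℚ

noncomputable def r : R2 := MvPolynomial.X 1

/-- `Q u d y = Σ_{k=0}^{d} C(d,k) ∏_{i=0}^{k-1}(i+1-r)(i+r) ∏_{i=k+1}^{d}(y+d+r-i)(y+u+r+i)`,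
as a function of the element `y` (so that substitutions like `y ↦ y+1` are meaningful). -/
noncomputable def Q (u d : ℕ) (y : R2) : R2 :=
  ∑ k ∈ Finset.range (d + 1),
    (d.choose k : R2) * (∏ i ∈ Finset.range k, (((i : R2) + 1 - r) * ((i : R2) + r))) *
      ∏ i ∈ Finset.Icc (k + 1) d,
        ((y + (d : R2) + r - (i : R2)) * (y + (u : R2) + r + (i : R2)))

/-- `φ d y = ∏_{i=1}^{d} (y+i)(y+i-1+2r)`. -/
noncomputable def phi (d : ℕ) (y : R2) : R2 :=
  ∏ i ∈ Finset.Icc 1 d, ((y + (i : R2)) * (y + (i : R2) - 1 + 2 * r))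

section Aux

variable {A : Type*} [CommRing A]

def cc (s : A) (k : ℕ) : A := ∏ i ∈ Finset.range k, (((i : A) + 1 - s) * ((i : A) + s))

def FF (s x : A) (d : ℕ) : A :=
  ∑ k ∈ Finset.range (d + 1), (d.choose k : A) * cc s k *
    ∏ i ∈ Finset.Icc (k + 1) d, ((x + (d : A) - (i : A)) * (x + (i : A)))

def UU (x : A) (m : ℕ) : A := ∏ i ∈ Finset.range m, (x + 1 + (i : A))

def TT (s x : A) (d : ℕ) : ℕ → A
  | 0 => 0
  | (j + 1) =>
    if j < d then
      -(x + (d : A) + 1) * (d.choose j : A) * cc s (j + 1) * UU x (d - j) *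
        ∏ i ∈ Finset.Icc (j + 2) d, (x + (i : A))
    else -cc s (d + 1)

lemma cc_succ (s : A) (k : ℕ) : cc s (k + 1) = cc s k * (((k : A) + 1 - s) * ((k : A) + s)) := by
  rw [cc, Finset.prod_range_succ, cc]

lemma UU_succ (x : A) (m : ℕ) : UU x (m + 1) = UU x m * (x + 1 + (m : A)) := by
  rw [UU, Finset.prod_range_succ, UU]

lemma pw (x : A) (m : ℕ) : ∏ j ∈ Finset.range (m + 1), (x + (j : A)) = x * UU x m := by
  rw [Finset.prod_range_succ']
  have h : ∀ i ∈ Finset.range m, x + ((i + 1 : ℕ) : A) = x + 1 + (i : A) := by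
    intro i _; push_cast; ring
  rw [Finset.prod_congr rfl h, UU]
  push_cast; ring

lemma A1 (x : A) (d k : ℕ) (hk : k ≤ d) :
    ∏ i ∈ Finset.Icc (k + 1) (d + 1), (x + ((d : A) + 1) - (i : A)) = x * UU x (d - k) := by
  rw [← pw, show d - k + 1 = d + 1 + 1 - (k + 1) by omega]
  refine Finset.prod_nbij' (fun i => d + 1 - i) (fun j => d + 1 - j) ?_ ?_ ?_ ?_ ?_
  · intro a ha; simp only [Finset.mem_Icc, Finset.mem_range] at *; omega
  · intro a ha; simp only [Finset.mem_Icc, Finset.mem_range] at *; omega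
  · intro a ha; simp only [Finset.mem_Icc] at ha; omega
  · intro a ha; simp only [Finset.mem_range] at ha; omega
  · intro a ha; simp only [Finset.mem_Icc] at ha
    rw [Nat.cast_sub (by omega)]
    push_cast; ring

lemma B1 (x : A) (d k : ℕ) :
    ∏ i ∈ Finset.Icc (k + 1) d, (x + 1 + (d : A) - (i : A)) = UU x (d - k) := by
  rw [UU]
  refine Finset.prod_nbij' (fun i => d - i) (fun j => d - j) ?_ ?_ ?_ ?_ ?_
  · intro a ha; simp only [Finset.mem_Icc, Finset.mem_range] at *; omega
  · intro a ha; simp only [Finset.mem_Icc, Finset.mem_range] at *; omega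
  · intro a ha; simp only [Finset.mem_Icc] at ha; omega
  · intro a ha; simp only [Finset.mem_range] at ha; omega
  · intro a ha; simp only [Finset.mem_Icc] at ha
    rw [Nat.cast_sub (by omega)]
    push_cast; ring

lemma B2 (x : A) (d k : ℕ) :
    ∏ i ∈ Finset.Icc (k + 1) d, (x + 1 + (i : A)) =
      ∏ i ∈ Finset.Icc (k + 2) (d + 1), (x + (i : A)) := by
  refine Finset.prod_nbij' (fun i => i + 1) (fun j => j - 1) ?_ ?_ ?_ ?_ ?_
  · intro a ha; simp only [Finset.mem_Icc] at *; omega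
  · intro a ha; simp only [Finset.mem_Icc] at *; omega
  · intro a ha; simp only [Finset.mem_Icc] at ha; omega
  · intro a ha; simp only [Finset.mem_Icc] at ha; omega
  · intro a _; push_cast; ring

lemma IccTop (x : A) {a d : ℕ} (h : a ≤ d + 1) :
    ∏ i ∈ Finset.Icc a (d + 1), (x + (i : A)) =
      (∏ i ∈ Finset.Icc a d, (x + (i : A))) * (x + (d : A) + 1) := by
  rw [Finset.prod_Icc_succ_top h]
  congr 1; push_cast; ring

lemma IccBot (x : A) {a d : ℕ} (h : a ≤ d) :
    ∏ i ∈ Finset.Icc a d, (x + (i : A)) =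
      (x + (a : A)) * ∏ i ∈ Finset.Icc (a + 1) d, (x + (i : A)) := by
  have hs : Finset.Icc a d = insert a (Finset.Icc (a + 1) d) := by
    ext b; simp only [Finset.mem_Icc, Finset.mem_insert]; omega
  rw [hs, Finset.prod_insert (by simp only [Finset.mem_Icc]; omega)]

lemma step (s x : A) (d k : ℕ) (hk : k ≤ d) :
    ((d + 1).choose k : A) * cc s k *
        ∏ i ∈ Finset.Icc (k + 1) (d + 1), ((x + ((d : A) + 1) - (i : A)) * (x + (i : A)))
      = (x + s) * (x + 1 - s) *
          ((d.choose k : A) * cc s k *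
            ∏ i ∈ Finset.Icc (k + 1) d, ((x + 1 + (d : A) - (i : A)) * (x + 1 + (i : A))))
        + (TT s x d (k + 1) - TT s x d k) := by
  rw [Finset.prod_mul_distrib, Finset.prod_mul_distrib, A1 x d k hk, B1, B2]
  rcases lt_or_eq_of_le hk with hlt | heq
  · -- k < d
    rw [IccBot x (show k + 1 ≤ d + 1 by omega), IccTop x (show k + 2 ≤ d + 1 by omega)]
    rcases k with _ | j
    · -- k = 0
      have h1 : TT s x d 1 = -(x + (d : A) + 1) * (d.choose 0 : A) * cc s 1 * UU x (d - 0) *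
          ∏ i ∈ Finset.Icc 2 d, (x + (i : A)) := by
        rw [TT, if_pos hlt]
      rw [h1, show TT s x d 0 = 0 from rfl]
      simp only [Nat.sub_zero, Nat.choose_zero_right, Nat.cast_one, cc, Finset.prod_range_zero,
        Finset.prod_range_one, Nat.cast_zero, Nat.cast_ofNat]
      push_cast
      ring
    · -- k = j + 1
      have hjd : j + 1 < d := hlt
      have h1 : TT s x d (j + 2) = -(x + (d : A) + 1) * (d.choose (j + 1) : A) * cc s (j + 2) *
          UU x (d - (j + 1)) * ∏ i ∈ Finset.Icc (j + 3) d, (x + (i : A)) := by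
        rw [TT, if_pos hjd]
      have h2 : TT s x d (j + 1) = -(x + (d : A) + 1) * (d.choose j : A) * cc s (j + 1) *
          UU x (d - j) * ∏ i ∈ Finset.Icc (j + 2) d, (x + (i : A)) := by
        rw [TT, if_pos (by omega : j < d)]
      rw [h1, h2, cc_succ s (j + 1),
        show d - j = (d - (j + 1)) + 1 by omega, UU_succ,
        Nat.cast_sub (show j + 1 ≤ d by omega),
        IccBot x (show j + 2 ≤ d by omega)]
      have hq : (d.choose (j + 1) : A) * ((j : A) + 1) = (d.choose j : A) * ((d : A) - (j : A)) := by
        have h := Nat.choose_succ_right_eq d j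
        have h' : ((d.choose (j + 1) * (j + 1) : ℕ) : A) = ((d.choose j * (d - j) : ℕ) : A) := by
          exact_mod_cast congrArg (Nat.cast : ℕ → A) h
        push_cast [Nat.cast_sub (show j ≤ d by omega)] at h'
        exact h'
      have hp : (((d + 1).choose (j + 1)) : A) = (d.choose j : A) + (d.choose (j + 1) : A) := by
        rw [Nat.choose_succ_succ]; push_cast; ring
      push_cast
      linear_combination
        ((x + (d : A) + 1) * (x + (j : A) + 2) * cc s (j + 1) * UU x (d - (j + 1)) *
          ∏ i ∈ Finset.Icc (j + 3) d, (x + (i : A))) * hq +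
        ((x + (d : A) + 1) * x * (x + (j : A) + 2) * cc s (j + 1) * UU x (d - (j + 1)) *
          ∏ i ∈ Finset.Icc (j + 3) d, (x + (i : A))) * hp
  · -- k = d
    subst heq
    have hB : Finset.Icc (k + 2) (k + 1) = (∅ : Finset ℕ) := Finset.Icc_eq_empty (by omega)
    have hC : Finset.Icc (k + 1) (k + 1) = {k + 1} := Finset.Icc_self (k + 1)
    have hT1 : TT s x k (k + 1) = -cc s (k + 1) := by
      rw [TT, if_neg (by omega)]
    rw [hB, hC, Finset.prod_empty, Finset.prod_singleton, hT1,
      Nat.sub_self, show UU x 0 = 1 from Finset.prod_range_zero _,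
      Nat.choose_succ_self_right, Nat.choose_self, cc_succ]
    rcases k with _ | j
    · rw [show TT s x 0 0 = 0 from rfl]
      simp only [cc, Finset.prod_range_zero]
      push_cast
      ring
    · have hT2 : TT s x (j + 1) (j + 1) = -(x + ((j + 1 : ℕ) : A) + 1) * ((j + 1).choose j : A) *
          cc s (j + 1) * UU x (j + 1 - j) * ∏ i ∈ Finset.Icc (j + 2) (j + 1), (x + (i : A)) := by
        rw [TT, if_pos (by omega)]
      rw [hT2, show j + 1 - j = 1 by omega,
        show Finset.Icc (j + 2) (j + 1) = (∅ : Finset ℕ) from Finset.Icc_eq_empty (by omega),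
        Finset.prod_empty, Nat.choose_succ_self_right,
        show UU x 1 = x + 1 + ((0 : ℕ) : A) from by rw [UU, Finset.prod_range_one]]
      push_cast
      ring

lemma key (s x : A) (d : ℕ) :
    FF s x (d + 1) = (x + s) * (x + 1 - s) * FF s (x + 1) d := by
  rw [FF, FF]
  push_cast
  rw [Finset.sum_range_succ,
    show Finset.Icc (d + 1 + 1) (d + 1) = (∅ : Finset ℕ) from Finset.Icc_eq_empty (by omega),
    Finset.prod_empty, Nat.choose_self,
    Finset.sum_congr rfl (fun k hk => step s x d k (by simp only [Finset.mem_range] at hk; omega)),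
    Finset.sum_add_distrib, ← Finset.mul_sum, Finset.sum_range_sub (TT s x d),
    show TT s x d (d + 1) = -cc s (d + 1) from by rw [TT, if_neg (by omega)],
    show TT s x d 0 = 0 from rfl]
  push_cast
  ring

lemma main (s : A) (d : ℕ) : ∀ x : A,
    FF s x d = ∏ i ∈ Finset.Icc 1 d, ((x - s + (i : A)) * (x + s + (i : A) - 1)) := by
  induction d with
  | zero => intro x; simp [FF, cc]
  | succ d ih =>
    intro x
    rw [key, ih (x + 1), ← Finset.Ico_add_one_right_eq_Icc 1 (d+1), ← Finset.Ico_add_one_right_eq_Icc 1 d,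
      Finset.prod_Ico_eq_prod_range, Finset.prod_Ico_eq_prod_range,
      show d + 1 + 1 - 1 = d + 1 by omega, show d + 1 - 1 = d by omega,
      Finset.prod_range_succ']
    have h : ∀ i ∈ Finset.range d,
        ((x + 1) - s + ((1 + i : ℕ) : A)) * ((x + 1) + s + ((1 + i : ℕ) : A) - 1)
          = (x - s + ((1 + (i + 1) : ℕ) : A)) * (x + s + ((1 + (i + 1) : ℕ) : A) - 1) := by
      intro i _; push_cast; ring
    rw [Finset.prod_congr rfl h]
    push_cast
    ring

end Aux

theorem stmt8 (d : ℕ) : Q 0 d (MvPolynomial.X 0) = phi d (MvPolynomial.X 0) := by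
  have h1 : Q 0 d (MvPolynomial.X 0) = FF r (MvPolynomial.X 0 + r) d := by
    rw [Q, FF]
    refine Finset.sum_congr rfl fun k _ => ?_
    rw [cc]
    congr 1
    refine Finset.prod_congr rfl fun i _ => ?_
    push_cast
    ring
  rw [h1, main r d (MvPolynomial.X 0 + r), phi]
  refine Finset.prod_congr rfl fun i _ => ?_
  ring
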